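/- Let F : ℝ^d → ℝ be twice continuously differentiable with Q-Lipschitz Hessian (i.e., ‖∇²F(x) − ∇²F(y)‖₂ ≤ Q‖x − y‖₂ for all x, y). Then for any points x₁, …, x_M ∈ ℝ^d with average x̄ = (1/M) Σₘ xₘ, one has ‖∇F(x̄) − (1/M) Σₘ ∇F(xₘ)‖₂² ≤ (Q²/(4M)) Σₘ ‖xₘ − x̄‖₂⁴. -/

import Mathlib

open scoped BigOperators

open Finset in
lemma quad_taylor {E G : Type*} [NormedAddCommGroup E] [NormedSpace ℝ E]
    [NormedAddCommGroup G] [NormedSpace ℝ G]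
    (g : E → G) (hg : Differentiable ℝ g) {Q : ℝ}
    (hQ : ∀ a b, ‖fderiv ℝ g a - fderiv ℝ g b‖ ≤ Q * ‖a - b‖) (x y : E) :
    ‖g y - g x - fderiv ℝ g x (y - x)‖ ≤ Q / 2 * ‖y - x‖ ^ 2 := by
  set v := y - x with hv
  set f : ℝ → G := fun t => g (x + t • v) - t • (fderiv ℝ g x v) - g x with hf
  have hline : ∀ t : ℝ, HasDerivAt (fun t : ℝ => x + t • v) v t := by
    intro t
    simpa using ((hasDerivAt_id t).smul_const v).const_add x
  have hf' : ∀ t : ℝ, HasDerivAt f (fderiv ℝ g (x + t • v) v - fderiv ℝ g x v) t := by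
    intro t
    have h1 : HasDerivAt (fun t : ℝ => g (x + t • v)) (fderiv ℝ g (x + t • v) v) t :=
      (hg _).hasFDerivAt.comp_hasDerivAt t (hline t)
    simpa [hf] using (h1.sub ((hasDerivAt_id t).smul_const (fderiv ℝ g x v))).sub_const (g x)
  have key : ‖f 1‖ ≤ Q / 2 * ‖v‖ ^ 2 * 1 ^ 2 := by
    refine image_norm_le_of_norm_deriv_right_le_deriv_boundary
      (f := f) (a := 0) (b := 1)
      (f' := fun t => fderiv ℝ g (x + t • v) v - fderiv ℝ g x v)
      (fun t _ => ((hf' t).continuousAt).continuousWithinAt)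
      (fun t _ => (hf' t).hasDerivWithinAt)
      (by simp [hf])
      (B := fun t => Q / 2 * ‖v‖ ^ 2 * t ^ 2) (B' := fun t => Q * ‖v‖ ^ 2 * t)
      (fun t => by
        have := (hasDerivAt_pow 2 t).const_mul (Q / 2 * ‖v‖ ^ 2)
        exact this.congr_deriv (by push_cast; ring))
      ?_ (Set.mem_Icc.2 ⟨zero_le_one, le_refl 1⟩)
    intro t ht
    have h1 : ‖fderiv ℝ g (x + t • v) v - fderiv ℝ g x v‖
        ≤ ‖fderiv ℝ g (x + t • v) - fderiv ℝ g x‖ * ‖v‖ := by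
      simpa using (fderiv ℝ g (x + t • v) - fderiv ℝ g x).le_opNorm v
    have h2 : ‖fderiv ℝ g (x + t • v) - fderiv ℝ g x‖ ≤ Q * ‖t • v‖ := by
      simpa using hQ (x + t • v) x
    have h3 : ‖t • v‖ = t * ‖v‖ := by
      rw [norm_smul, Real.norm_eq_abs, abs_of_nonneg ht.1]
    calc ‖fderiv ℝ g (x + t • v) v - fderiv ℝ g x v‖
        ≤ (Q * (t * ‖v‖)) * ‖v‖ := h1.trans (by
          apply mul_le_mul_of_nonneg_right _ (norm_nonneg v)
          rw [← h3]; exact h2)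
      _ = Q * ‖v‖ ^ 2 * t := by ring
  have hf1 : f 1 = g y - g x - fderiv ℝ g x v := by
    simp [hf, hv]
    abel
  rw [hf1] at key
  simpa using key

/-- If `F` is twice continuously differentiable with `Q`-Lipschitz Hessian, then for any
points `x 0, …, x (M-1)` with average `x̄`, the squared norm of the difference between the
gradient at the average and the average of the gradients is bounded by
`Q²/(4M) · Σₘ ‖xₘ − x̄‖⁴`. -/
theorem stmt_0 {d M : ℕ} (hM : 0 < M) (Q : ℝ)
    (F : EuclideanSpace ℝ (Fin d) → ℝ)
    (hF : ContDiff ℝ 2 F)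
    (hQ : ∀ x y : EuclideanSpace ℝ (Fin d),
      ‖fderiv ℝ (fderiv ℝ F) x - fderiv ℝ (fderiv ℝ F) y‖ ≤ Q * ‖x - y‖)
    (x : Fin M → EuclideanSpace ℝ (Fin d)) :
    ‖gradient F ((M : ℝ)⁻¹ • ∑ m, x m) - (M : ℝ)⁻¹ • ∑ m, gradient F (x m)‖ ^ 2 ≤
      Q ^ 2 / (4 * M) * ∑ m, ‖x m - (M : ℝ)⁻¹ • ∑ i, x i‖ ^ 4 := by
  set xb : EuclideanSpace ℝ (Fin d) := (M : ℝ)⁻¹ • ∑ m, x m with hxb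
  set g : EuclideanSpace ℝ (Fin d) → (EuclideanSpace ℝ (Fin d) →L[ℝ] ℝ) := fderiv ℝ F with hgdef
  have hMR : (M : ℝ) ≠ 0 := Nat.cast_ne_zero.2 hM.ne'
  have hg : Differentiable ℝ g := (hF.fderiv_right (m := 1) (by norm_num)).differentiable one_ne_zero
  have hQ' : ∀ a b : EuclideanSpace ℝ (Fin d), ‖fderiv ℝ g a - fderiv ℝ g b‖ ≤ |Q| * ‖a - b‖ := fun a b =>
    (hQ a b).trans (mul_le_mul_of_nonneg_right (le_abs_self Q) (norm_nonneg _))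
  have htay : ∀ m, ‖g (x m) - g xb - fderiv ℝ g xb (x m - xb)‖ ≤ |Q| / 2 * ‖x m - xb‖ ^ 2 :=
    fun m => quad_taylor g hg hQ' xb (x m)
  -- sum of deviations is zero
  have hsum0 : ∑ m, (x m - xb) = 0 := by
    rw [Finset.sum_sub_distrib]
    simp only [Finset.sum_const, Finset.card_univ, Fintype.card_fin, hxb]
    rw [← Nat.cast_smul_eq_nsmul ℝ, smul_smul, mul_inv_cancel₀ hMR, one_smul, sub_self]
  have hHsum : ∑ m, fderiv ℝ g xb (x m - xb) = 0 := by
    rw [← map_sum, hsum0, map_zero]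
  -- identity
  have hid : g xb - (M : ℝ)⁻¹ • ∑ m, g (x m)
      = -((M : ℝ)⁻¹ • ∑ m, (g (x m) - g xb - fderiv ℝ g xb (x m - xb))) := by
    have : ∑ m, (g (x m) - g xb - fderiv ℝ g xb (x m - xb))
        = ∑ m, g (x m) - (M : ℝ) • g xb := by
      rw [Finset.sum_sub_distrib, Finset.sum_sub_distrib, hHsum, sub_zero]
      simp only [Finset.sum_const, Finset.card_univ, Fintype.card_fin]
      rw [← Nat.cast_smul_eq_nsmul ℝ]
    rw [this, smul_sub, smul_smul, inv_mul_cancel₀ hMR, one_smul, neg_sub]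
  -- norm bound on fderiv difference
  have hnorm : ‖g xb - (M : ℝ)⁻¹ • ∑ m, g (x m)‖ ≤ (M : ℝ)⁻¹ * (|Q| / 2) * ∑ m, ‖x m - xb‖ ^ 2 := by
    rw [hid, norm_neg]
    have hns := norm_smul ((M : ℝ)⁻¹)
      (∑ m, (g (x m) - g xb - fderiv ℝ g xb (x m - xb)))
    rw [hns, norm_inv, Real.norm_natCast, mul_assoc]
    refine mul_le_mul_of_nonneg_left ?_ (by positivity)
    calc ‖∑ m, (g (x m) - g xb - fderiv ℝ g xb (x m - xb))‖
        ≤ ∑ m, ‖g (x m) - g xb - fderiv ℝ g xb (x m - xb)‖ := norm_sum_le _ _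
      _ ≤ ∑ m, |Q| / 2 * ‖x m - xb‖ ^ 2 := Finset.sum_le_sum fun m _ => htay m
      _ = |Q| / 2 * ∑ m, ‖x m - xb‖ ^ 2 := by rw [Finset.mul_sum]
  -- gradient to fderiv
  have hgrad : ‖gradient F xb - (M : ℝ)⁻¹ • ∑ m, gradient F (x m)‖
      = ‖g xb - (M : ℝ)⁻¹ • ∑ m, g (x m)‖ := by
    have : gradient F xb - (M : ℝ)⁻¹ • ∑ m, gradient F (x m)
        = (InnerProductSpace.toDual ℝ (EuclideanSpace ℝ (Fin d))).symm (g xb - (M : ℝ)⁻¹ • ∑ m, g (x m)) := by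
      simp [gradient, map_sub, map_smul, map_sum, hgdef]
    rw [this, LinearIsometryEquiv.norm_map]
  -- finish
  rw [hgrad]
  have h1 : ‖g xb - (M : ℝ)⁻¹ • ∑ m, g (x m)‖ ^ 2
      ≤ ((M : ℝ)⁻¹ * (|Q| / 2) * ∑ m, ‖x m - xb‖ ^ 2) ^ 2 :=
    pow_le_pow_left₀ (norm_nonneg _) hnorm 2
  refine h1.trans ?_
  have hcs : (∑ m, ‖x m - xb‖ ^ 2) ^ 2 ≤ (M : ℝ) * ∑ m, (‖x m - xb‖ ^ 2) ^ 2 := by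
    have := sq_sum_le_card_mul_sum_sq (s := Finset.univ) (f := fun m => ‖x m - xb‖ ^ 2)
    simpa using this
  calc ((M : ℝ)⁻¹ * (|Q| / 2) * ∑ m, ‖x m - xb‖ ^ 2) ^ 2
      = ((M : ℝ)⁻¹ * (|Q| / 2)) ^ 2 * (∑ m, ‖x m - xb‖ ^ 2) ^ 2 := by ring
    _ ≤ ((M : ℝ)⁻¹ * (|Q| / 2)) ^ 2 * ((M : ℝ) * ∑ m, (‖x m - xb‖ ^ 2) ^ 2) :=
        mul_le_mul_of_nonneg_left hcs (by positivity)
    _ = Q ^ 2 / (4 * M) * ∑ m, ‖x m - xb‖ ^ 4 := by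
        have h4 : ∀ m : Fin M, (‖x m - xb‖ ^ 2) ^ 2 = ‖x m - xb‖ ^ 4 := fun m => by ring
        simp_rw [h4]
        field_simp [sq_abs]
        rw [sq_abs]; ring
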